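/- For fixed ℓ ≥ 1 and n > ℓ, the polynomial Q_{n,ℓ}(t) = Σ_{p=0}^{n-ℓ-1} C(n-1, ℓ+p)·C(ℓ-1+p, ℓ-1)·t^p satisfies: Q_{n,ℓ}(t) is the coefficient of x^ℓ y^n in the formal power series (y/(1-y))·(1-(1+t)y)/(1-(1+t+x)y). -/

import Mathlib

/-- Power series in two variables `x = X 0`, `y = X 1` with coefficients
in the polynomial ring `ℚ[t]`. -/
noncomputable abbrev PS2 := MvPowerSeries (Fin 2) (Polynomial ℚ)

noncomputable def xS : PS2 := MvPowerSeries.X 0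
noncomputable def yS : PS2 := MvPowerSeries.X 1
/-- the variable `t`, a constant power series -/
noncomputable def tS : PS2 := MvPowerSeries.C Polynomial.X

/-- `Q_{n,ℓ}(t) = Σ_{p=0}^{n-ℓ-1} C(n-1, ℓ+p)·C(ℓ-1+p, ℓ-1)·t^p`. -/
noncomputable def Q (n ℓ : ℕ) : Polynomial ℚ :=
  ∑ p ∈ Finset.range (n - ℓ), (Nat.choose (n - 1) (ℓ + p) * Nat.choose (ℓ - 1 + p) (ℓ - 1) : ℚ) •
      Polynomial.X ^ p

/-! ### Auxiliary infrastructure -/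

noncomputable def E (a b : ℕ) : Fin 2 →₀ ℕ := Finsupp.single 0 a + Finsupp.single 1 b
noncomputable def M (i j : ℕ) (r : Polynomial ℚ) : PS2 := MvPowerSeries.monomial (E i j) r
noncomputable def cF (F : PS2) (a b : ℕ) : Polynomial ℚ :=
  MvPowerSeries.coeff (E a b) F

lemma E_apply0 (a b : ℕ) : E a b 0 = a := by simp [E, Finsupp.single_apply]
lemma E_apply1 (a b : ℕ) : E a b 1 = b := by simp [E, Finsupp.single_apply]

lemma E_le (i j a b : ℕ) : E i j ≤ E a b ↔ i ≤ a ∧ j ≤ b := by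
  constructor
  · intro h
    exact ⟨by simpa [E_apply0] using h 0, by simpa [E_apply1] using h 1⟩
  · rintro ⟨h1, h2⟩ s
    fin_cases s <;> simpa [E_apply0, E_apply1]

lemma E_eq (i j a b : ℕ) : E a b = E i j ↔ a = i ∧ b = j := by
  constructor
  · intro h
    have h0 : E a b 0 = E i j 0 := by rw [h]
    have h1 : E a b 1 = E i j 1 := by rw [h]
    rw [E_apply0, E_apply0] at h0
    rw [E_apply1, E_apply1] at h1
    exact ⟨h0, h1⟩
  · rintro ⟨rfl, rfl⟩; rfl

lemma E_sub (i j a b : ℕ) : E a b - E i j = E (a-i) (b-j) := by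
  ext s
  fin_cases s <;> simp [Finsupp.tsub_apply, E_apply0, E_apply1]

lemma cm (F : PS2) (a b i j : ℕ) (r : Polynomial ℚ) :
    MvPowerSeries.coeff (E a b) (F * M i j r)
      = if i ≤ a ∧ j ≤ b then cF F (a-i) (b-j) * r else 0 := by
  rw [M, MvPowerSeries.coeff_mul_monomial]
  by_cases h : i ≤ a ∧ j ≤ b
  · rw [if_pos ((E_le i j a b).mpr h), if_pos h, E_sub]; rfl
  · rw [if_neg (fun hc => h ((E_le i j a b).mp hc)), if_neg h]

lemma cMon (a b i j : ℕ) (r : Polynomial ℚ) :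
    MvPowerSeries.coeff (E a b) (M i j r)
      = if a = i ∧ b = j then r else 0 := by
  rw [M, MvPowerSeries.coeff_monomial]
  by_cases h : a = i ∧ b = j
  · rw [if_pos ((E_eq i j a b).mpr h), if_pos h]
  · rw [if_neg (fun hc => h ((E_eq i j a b).mp hc)), if_neg h]

lemma E00 : E 0 0 = 0 := by simp [E]
lemma hone : (1 : PS2) = M 0 0 1 := by rw [M, E00, ← MvPowerSeries.monomial_zero_one]
lemma hy : yS = M 0 1 1 := by
  rw [yS, MvPowerSeries.X, M]; congr 1; simp [E]
lemma hx : xS = M 1 0 1 := by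
  rw [xS, MvPowerSeries.X, M]; congr 1; simp [E]
lemma ht : tS = M 0 0 Polynomial.X := by rw [tS, M, E00]; rfl

lemma Mmul (i j i' j' : ℕ) (r r' : Polynomial ℚ) :
    M i j r * M i' j' r' = M (i+i') (j+j') (r*r') := by
  rw [M, M, M, MvPowerSeries.monomial_mul_monomial]
  congr 1
  simp only [E, Finsupp.single_add]
  abel

lemma hD : (1 - yS) * (1 - (1 + tS + xS) * yS)
    = M 0 0 1 - M 0 1 1 - M 0 1 1 - M 0 1 Polynomial.X - M 1 1 1
      + M 0 2 1 + M 0 2 Polynomial.X + M 1 2 1 := by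
  have e1 : (1 - yS) * (1 - (1 + tS + xS) * yS)
      = 1 - yS - yS - tS*yS - xS*yS + yS*yS + tS*(yS*yS) + xS*(yS*yS) := by ring
  rw [e1, hy, hx, ht, hone]
  simp only [Mmul]
  norm_num

lemma hR : yS * (1 - (1 + tS) * yS) = M 0 1 1 - M 0 2 1 - M 0 2 Polynomial.X := by
  have e1 : yS * (1 - (1 + tS) * yS) = yS - yS*yS - tS*(yS*yS) := by ring
  rw [e1, hy, ht]
  simp only [Mmul]
  norm_num

lemma recur (F : PS2)
    (hF : F * ((1 - yS) * (1 - (1 + tS + xS) * yS)) = yS * (1 - (1 + tS) * yS))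
    (a b : ℕ) :
    cF F a b = (if a = 0 ∧ b = 1 then 1 else 0)
      - (if a = 0 ∧ b = 2 then 1 + Polynomial.X else 0)
      + (if 1 ≤ b then (2 + Polynomial.X) * cF F a (b-1) else 0)
      + (if 1 ≤ a ∧ 1 ≤ b then cF F (a-1) (b-1) else 0)
      - (if 2 ≤ b then (1 + Polynomial.X) * cF F a (b-2) else 0)
      - (if 1 ≤ a ∧ 2 ≤ b then cF F (a-1) (b-2) else 0) := by
  have h := congrArg (MvPowerSeries.coeff (E a b)) hF
  rw [hD, hR] at h
  simp only [mul_sub, mul_add] at h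
  simp only [map_sub, map_add, cm, cMon] at h
  simp only [Nat.zero_le, true_and, Nat.sub_zero, mul_one] at h
  simp only [if_true] at h
  split_ifs at h ⊢ <;> linear_combination h

/-! ### Polynomial identities for `Q` -/

lemma coeffQ (n ℓ p : ℕ) (hℓ : 1 ≤ ℓ) :
    (Q n ℓ).coeff p
      = (Nat.choose (n - 1) (ℓ + p) : ℚ) * (Nat.choose (ℓ - 1 + p) (ℓ - 1) : ℚ) := by
  rw [Q, Polynomial.finset_sum_coeff]
  simp only [Polynomial.coeff_smul, Polynomial.coeff_X_pow, smul_eq_mul, mul_ite, mul_one, mul_zero]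
  rw [Finset.sum_ite_eq (Finset.range (n - ℓ)) p]
  split_ifs with h
  · rfl
  · rw [Finset.mem_range, not_lt] at h
    rw [Nat.choose_eq_zero_of_lt (by omega)]
    simp

lemma Q_zero (n ℓ : ℕ) (h : n ≤ ℓ) : Q n ℓ = 0 := by
  rw [Q, Nat.sub_eq_zero_of_le h]
  simp

lemma Q21 : Q 2 1 = 1 := by
  rw [Q]
  norm_num

lemma Qrec1 (n : ℕ) :
    Q (n+3) 1 + (1 + Polynomial.X) * Q (n+1) 1 = (2 + Polynomial.X) * Q (n+2) 1 := by
  ext p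
  have e : ∀ (f : Polynomial ℚ) (c : ℚ) (p : ℕ),
      ((Polynomial.C c + Polynomial.X) * f).coeff p
        = c * f.coeff p + (if p = 0 then 0 else f.coeff (p-1)) := by
    intro f c p
    rw [add_mul, Polynomial.coeff_add, Polynomial.coeff_C_mul]
    cases p with
    | zero => simp
    | succ q => simp [Polynomial.coeff_X_mul]
  have h1 : (1 + Polynomial.X : Polynomial ℚ) = Polynomial.C 1 + Polynomial.X := by norm_num
  have h2 : (2 + Polynomial.X : Polynomial ℚ) = Polynomial.C 2 + Polynomial.X := by rw [map_ofNat]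
  rw [Polynomial.coeff_add, h1, h2, e, e]
  cases p with
  | zero =>
    simp only [if_pos rfl, coeffQ _ _ _ le_rfl]
    push_cast
    simp [Nat.choose_one_right]
    push_cast
    ring
  | succ q =>
    simp only [Nat.succ_ne_zero, if_neg, Nat.add_sub_cancel, coeffQ _ _ _ le_rfl,
      show (1:ℕ)-1 = 0 from rfl, Nat.choose_zero_right, if_false, Nat.cast_one, mul_one,
      show ∀ m:ℕ, 1 + m = m + 1 from fun m => by omega, if_false]
    have q1 : (((n+2).choose (q+1+1)) : ℚ) = (n+1).choose (q+1) + (n+1).choose (q+1+1) := by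
      exact_mod_cast Nat.choose_succ_succ (n+1) (q+1)
    have q2 : (((n+1).choose (q+1+1)) : ℚ) = n.choose (q+1) + n.choose (q+1+1) := by
      exact_mod_cast Nat.choose_succ_succ n (q+1)
    push_cast
    linear_combination q1 - q2

lemma Qrec2 (n c : ℕ) :
    Q (n+3) (c+2) + (1 + Polynomial.X) * Q (n+1) (c+2) + Q (n+1) (c+1)
      = (2 + Polynomial.X) * Q (n+2) (c+2) + Q (n+2) (c+1) := by
  ext p
  have e : ∀ (f : Polynomial ℚ) (cc : ℚ) (p : ℕ),
      ((Polynomial.C cc + Polynomial.X) * f).coeff p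
        = cc * f.coeff p + (if p = 0 then 0 else f.coeff (p-1)) := by
    intro f cc p
    rw [add_mul, Polynomial.coeff_add, Polynomial.coeff_C_mul]
    cases p with
    | zero => simp
    | succ q => simp [Polynomial.coeff_X_mul]
  have h1 : (1 + Polynomial.X : Polynomial ℚ) = Polynomial.C 1 + Polynomial.X := by norm_num
  have h2 : (2 + Polynomial.X : Polynomial ℚ) = Polynomial.C 2 + Polynomial.X := by rw [map_ofNat]
  rw [Polynomial.coeff_add, Polynomial.coeff_add, Polynomial.coeff_add, h1, h2, e, e]
  have C2 : ∀ n p, (Q n (c+2)).coeff p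
      = ((n-1).choose (c+2+p) : ℚ) * ((c+2-1+p).choose (c+2-1) : ℚ) :=
    fun n p => coeffQ n (c+2) p (by omega)
  have C1 : ∀ n p, (Q n (c+1)).coeff p
      = ((n-1).choose (c+1+p) : ℚ) * ((c+1-1+p).choose (c+1-1) : ℚ) :=
    fun n p => coeffQ n (c+1) p (by omega)
  cases p with
  | zero =>
    simp only [if_pos rfl, if_true, C2, C1, Nat.add_zero, show n+3-1 = n+2 by omega,
      show n+2-1 = n+1 by omega, show n+1-1 = n by omega, show c+2-1 = c+1 by omega,
      show c+1-1 = c by omega, Nat.choose_self, Nat.cast_one, mul_one, add_zero, one_mul]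
    have q1 : (((n+2).choose (c+2)) : ℚ) = (n+1).choose (c+1) + (n+1).choose (c+2) := by
      exact_mod_cast Nat.choose_succ_succ (n+1) (c+1)
    have q2 : (((n+1).choose (c+2)) : ℚ) = n.choose (c+1) + n.choose (c+2) := by
      exact_mod_cast Nat.choose_succ_succ n (c+1)
    linear_combination q1 - q2
  | succ q =>
    simp only [Nat.succ_ne_zero, if_neg, if_false, show q+1-1 = q by omega,
      C2, C1, show n+3-1 = n+2 by omega, show n+2-1 = n+1 by omega,
      show n+1-1 = n by omega, show c+2-1 = c+1 by omega, show c+1-1 = c by omega,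
      show c+2+(q+1) = (c+q+2)+1 by omega, show c+1+(q+1) = c+q+2 by omega,
      show c+2+q = c+q+2 by omega, show c+1+q = c+q+1 by omega,
      show c+(q+1) = c+q+1 by omega]
    have hA : (((c+q+2).choose (c+1)) : ℚ) = (c+q+1).choose c + (c+q+1).choose (c+1) := by
      exact_mod_cast Nat.choose_succ_succ (c+q+1) c
    have h1 : (((n+2).choose ((c+q+2)+1)) : ℚ)
        = (n+1).choose (c+q+2) + (n+1).choose ((c+q+2)+1) := by
      exact_mod_cast Nat.choose_succ_succ (n+1) (c+q+2)
    have h2 : (((n+1).choose ((c+q+2)+1)) : ℚ)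
        = n.choose (c+q+2) + n.choose ((c+q+2)+1) := by
      exact_mod_cast Nat.choose_succ_succ n (c+q+2)
    linear_combination (((c+q+2).choose (c+1) : ℚ)) * h1
      + (((n+1).choose (c+q+2) : ℚ) - (n.choose (c+q+2) : ℚ)) * hA
      - (((c+q+2).choose (c+1) : ℚ)) * h2

/-- for `ℓ ≥ 1` and `n > ℓ`, `Q_{n,ℓ}(t)` is the coefficient of
`x^ℓ y^n` in `(y/(1-y))·(1-(1+t)y)/(1-(1+t+x)y)`.  The series `F` is specified
by clearing the (unit) denominators. -/
theorem stmt1 (ℓ n : ℕ) (hℓ : 1 ≤ ℓ) (hn : ℓ < n) (F : PS2)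
    (hF : F * ((1 - yS) * (1 - (1 + tS + xS) * yS)) = yS * (1 - (1 + tS) * yS)) :
    MvPowerSeries.coeff
      (Finsupp.single (0 : Fin 2) ℓ + Finsupp.single 1 n) F = Q n ℓ := by
  have key : ∀ b a, cF F a b
      = if a = 0 then (if b = 0 then (0 : Polynomial ℚ) else 1) else Q b a := by
    intro b
    induction b using Nat.strong_induction_on with
    | _ b ih =>
      intro a
      rw [recur F hF a b]
      match b with
      | 0 =>
        have e1 : ¬(a = 0 ∧ (0:ℕ) = 1) := by omega
        have e2 : ¬(a = 0 ∧ (0:ℕ) = 2) := by omega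
        have e3 : ¬((1:ℕ) ≤ 0) := by omega
        have e4 : ¬(1 ≤ a ∧ (1:ℕ) ≤ 0) := by omega
        have e5 : ¬((2:ℕ) ≤ 0) := by omega
        have e6 : ¬(1 ≤ a ∧ (2:ℕ) ≤ 0) := by omega
        rw [if_neg e1, if_neg e2, if_neg e3, if_neg e4, if_neg e5, if_neg e6]
        by_cases ha : a = 0
        · rw [if_pos ha, if_pos rfl]; ring
        · rw [if_neg ha, Q_zero 0 a (Nat.zero_le a)]; ring
      | 1 =>
        have i0 : ∀ a', cF F a' 0
            = if a' = 0 then (if 0 = 0 then (0 : Polynomial ℚ) else 1) else Q 0 a' :=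
          fun a' => ih 0 (by omega) a'
        by_cases ha : a = 0
        · subst ha
          norm_num [i0]
        · simp only [i0, show (1:ℕ)-1 = 0 from rfl]
          simp [ha, Q_zero 0 a (Nat.zero_le a), Q_zero 1 a (by omega : 1 ≤ a),
            Q_zero 0 (a-1) (Nat.zero_le (a-1))]
      | (b''+2) =>
        have i1 : ∀ a', cF F a' (b''+1)
            = if a' = 0 then (1 : Polynomial ℚ) else Q (b''+1) a' := by
          intro a'
          rw [ih (b''+1) (by omega) a', if_neg (Nat.succ_ne_zero b'')]
        have i2 : ∀ a', cF F a' b''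
            = if a' = 0 then (if b'' = 0 then (0 : Polynomial ℚ) else 1) else Q b'' a' :=
          fun a' => ih b'' (by omega) a'
        have g1 : (1:ℕ) ≤ b''+2 := by omega
        have g2 : (2:ℕ) ≤ b''+2 := by omega
        have gne : ¬ (a = 0 ∧ b''+2 = 1) := by omega
        rw [show b''+2-1 = b''+1 by omega, show b''+2-2 = b'' by omega, i1, i1, i2, i2,
          if_neg gne, if_pos g1, if_pos g2]
        match a with
        | 0 =>
          have hna : ¬ ((1:ℕ) ≤ 0 ∧ (1:ℕ) ≤ b''+2) := by omega
          have hna' : ¬ ((1:ℕ) ≤ 0 ∧ (2:ℕ) ≤ b''+2) := by omega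
          rw [if_neg hna, if_neg hna', if_pos (rfl : (0:ℕ) = 0), if_pos (rfl : (0:ℕ) = 0),
            if_pos (rfl : (0:ℕ) = 0), if_neg (Nat.succ_ne_zero (b''+1))]
          by_cases hb : b'' = 0
          · subst hb
            norm_num
            ring
          · rw [if_neg hb]
            have h2' : ¬ ((0:ℕ) = 0 ∧ b''+2 = 2) := by omega
            rw [if_neg h2']
            ring
        | 1 =>
          have h10 : ¬ ((1:ℕ) = 0) := by omega
          have hand1 : (1:ℕ) ≤ 1 ∧ (1:ℕ) ≤ b''+2 := by omega
          have hand2 : (1:ℕ) ≤ 1 ∧ (2:ℕ) ≤ b''+2 := by omega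
          rw [if_neg h10, if_neg h10, if_neg h10, if_pos hand1, if_pos hand2,
            show (1:ℕ)-1 = 0 from rfl, if_pos (rfl : (0:ℕ) = 0), if_pos (rfl : (0:ℕ) = 0)]
          match b'' with
          | 0 =>
            have he2 : ((1:ℕ) = 0 ∧ (0:ℕ)+2 = 2) = False := by simp
            have he2' : ¬ ((1:ℕ) = 0 ∧ (0:ℕ)+2 = 2) := by omega
            rw [if_neg he2', if_pos (rfl : (0:ℕ) = 0),
              Q_zero (0+1) 1 (by omega), Q_zero 0 1 (by omega),
              show (0:ℕ)+2 = 2 from rfl, Q21]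
            ring
          | (m+1) =>
            have hne2 : ¬ ((1:ℕ) = 0 ∧ m+1+2 = 2) := by omega
            have hne0 : ¬ (m+1 = 0) := by omega
            rw [if_neg hne2, if_neg hne0,
              show m+1+1 = m+2 from by omega, show m+1+2 = m+3 from by omega]
            linear_combination -Qrec1 m
        | (c+2) =>
          have hc0 : ¬ (c+2 = 0) := by omega
          have hc1 : ¬ (c+1 = 0) := by omega
          have hand1 : (1:ℕ) ≤ c+2 ∧ (1:ℕ) ≤ b''+2 := by omega
          have hand2 : (1:ℕ) ≤ c+2 ∧ (2:ℕ) ≤ b''+2 := by omega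
          have hne2 : ¬ (c+2 = 0 ∧ b''+2 = 2) := by omega
          rw [if_neg hc0, if_neg hc0, if_neg hc0, if_neg hne2, if_pos hand1, if_pos hand2,
            show c+2-1 = c+1 by omega, if_neg hc1, if_neg hc1]
          match b'' with
          | 0 =>
            rw [Q_zero (0+2) (c+2) (by omega), Q_zero (0+1) (c+2) (by omega),
              Q_zero (0+1) (c+1) (by omega), Q_zero 0 (c+2) (by omega),
              Q_zero 0 (c+1) (by omega)]
            ring
          | (m+1) =>
            rw [show m+1+1 = m+2 from by omega, show m+1+2 = m+3 from by omega]
            linear_combination -Qrec2 m c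
  have h := key n ℓ
  rw [if_neg (by omega)] at h
  exact h
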